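/- arXiv:1701.03624 — 2 statements merged into one kernel-verified Lean document; each statement's English description precedes it below -/
import Mathlib

section
/- Let V be a finite-dimensional F₂-representation of Γ_Δ = C₃ ⋊ C₄ and let U ≤ V be a Γ_Δ-subrepresentation which, as a representation of the subgroup C₄, is isomorphic to a direct sum of k ≥ 1 copies of the regular representation F₂[C₄]. Then U is a direct summand of V as a Γ_Δ-representation. -/
open Polynomial

set_option synthInstance.maxHeartbeats 1000000
set_option maxHeartbeats 1000000

/-- Relations for `Γ_Δ = C₃ ⋊ C₄ = ⟨c, b | c³ = 1, b⁴ = 1, bc = c²b⟩`,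
generators `c = of 0`, `b = of 1`. -/
def sdRels : Set (FreeGroup (Fin 2)) :=
  {FreeGroup.of 0 ^ 3, FreeGroup.of 1 ^ 4,
   FreeGroup.of 1 * FreeGroup.of 0 * (FreeGroup.of 0 ^ 2 * FreeGroup.of 1)⁻¹}

/-- `R₄ = F₂[b]/(b+1)⁴ = F₂[C₄]`, the regular representation of `C₄` over `F₂`. -/
noncomputable abbrev R4 : Type :=
  (ZMod 2)[X] ⧸ Ideal.span {((X : (ZMod 2)[X]) + 1) ^ 4}

/-- The class of `b` in `R₄`. -/
noncomputable def bbar : R4 :=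
  Ideal.Quotient.mk (Ideal.span {((X : (ZMod 2)[X]) + 1) ^ 4}) X

section AuxGroup

lemma sd_rel_one {r : FreeGroup (Fin 2)} (hr : r ∈ sdRels) :
    PresentedGroup.mk sdRels r = 1 :=
  (QuotientGroup.eq_one_iff r).mpr (Subgroup.subset_normalClosure hr)

lemma sd_c3 : (PresentedGroup.of 0 : PresentedGroup sdRels) ^ 3 = 1 := by
  have := sd_rel_one (r := FreeGroup.of 0 ^ 3) (by simp [sdRels])
  simpa [PresentedGroup.of, map_pow] using this

lemma sd_b4 : (PresentedGroup.of 1 : PresentedGroup sdRels) ^ 4 = 1 := by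
  have := sd_rel_one (r := FreeGroup.of 1 ^ 4) (by simp [sdRels])
  simpa [PresentedGroup.of, map_pow] using this

lemma sd_bc : (PresentedGroup.of 1 : PresentedGroup sdRels) * PresentedGroup.of 0 =
    PresentedGroup.of 0 ^ 2 * PresentedGroup.of 1 := by
  have := sd_rel_one
    (r := FreeGroup.of 1 * FreeGroup.of 0 * (FreeGroup.of 0 ^ 2 * FreeGroup.of 1)⁻¹)
    (by simp [sdRels])
  rw [map_mul, map_inv, mul_inv_eq_one] at this
  simpa [PresentedGroup.of, map_mul, map_pow] using this

end AuxGroup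

section AuxComm

variable {M N : Type*} [AddCommMonoid M] [AddCommMonoid N]
  [Module (ZMod 2) M] [Module (ZMod 2) N]

lemma comm_pow (E : M →ₗ[ZMod 2] N) (f : Module.End (ZMod 2) M)
    (g : Module.End (ZMod 2) N) (h : ∀ m, E (f m) = g (E m)) :
    ∀ (n : ℕ) (m : M), E ((f ^ n) m) = (g ^ n) (E m) := by
  intro n
  induction n with
  | zero => intro m; simp
  | succ n ih =>
    intro m
    rw [pow_succ, pow_succ, Module.End.mul_apply, Module.End.mul_apply, ih, ← h]

lemma comm_aeval (E : M →ₗ[ZMod 2] N) (f : Module.End (ZMod 2) M)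
    (g : Module.End (ZMod 2) N) (h : ∀ m, E (f m) = g (E m)) :
    ∀ (p : (ZMod 2)[X]) (m : M), E ((aeval f p) m) = (aeval g p) (E m) := by
  intro p
  induction p using Polynomial.induction_on' with
  | add p q hp hq =>
    intro m
    rw [map_add, map_add, LinearMap.add_apply, LinearMap.add_apply, map_add, hp, hq]
  | monomial n a =>
    intro m
    rw [aeval_monomial, aeval_monomial, Module.End.mul_apply, Module.End.mul_apply]
    rw [Module.algebraMap_end_apply, Module.algebraMap_end_apply, map_smul,
      comm_pow E f g h]

end AuxComm

lemma two_torsion {M : Type*} [AddCommMonoid M] [Module (ZMod 2) M] (x : M) : x + x = 0 := by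
  have h : ((1 : ZMod 2) + 1) • x = x + x := by rw [add_smul, one_smul]
  rw [← h, show (1 : ZMod 2) + 1 = 0 by decide, zero_smul]

section AuxR4

/-- the ideal -/
noncomputable abbrev I4 : Ideal (ZMod 2)[X] := Ideal.span {((X : (ZMod 2)[X]) + 1) ^ 4}

/-- the quotient map -/
noncomputable abbrev q4 : (ZMod 2)[X] →+* R4 := Ideal.Quotient.mk I4

lemma q4_surj : Function.Surjective q4 := Ideal.Quotient.mk_surjective

lemma bbar_eq : bbar = q4 X := rfl

lemma tbar_eq : bbar + 1 = q4 (X + 1) := by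
  rw [bbar_eq, map_add, map_one]

lemma X1_eq : ((X : (ZMod 2)[X]) + 1) = X - C 1 := by
  rw [map_one, sub_eq_add_neg, CharTwo.neg_eq]

lemma X1_ne : ((X : (ZMod 2)[X]) + 1) ≠ 0 := by
  rw [X1_eq]
  exact Polynomial.X_sub_C_ne_zero 1

lemma X1_prime : Prime ((X : (ZMod 2)[X]) + 1) := by
  rw [X1_eq]
  exact Polynomial.prime_X_sub_C 1

lemma q4_t4 : q4 (((X : (ZMod 2)[X]) + 1) ^ 4) = 0 := by
  rw [Ideal.Quotient.eq_zero_iff_mem]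
  exact Ideal.subset_span rfl

lemma tbar4 : (bbar + 1) ^ 4 = 0 := by
  rw [tbar_eq, ← map_pow, q4_t4]

/-- annihilator lemma -/
lemma r4_ann {i : ℕ} (hi : i ≤ 4) (x : R4) (hx : (bbar + 1) ^ (4 - i) * x = 0) :
    ∃ y : R4, x = (bbar + 1) ^ i * y := by
  obtain ⟨p, rfl⟩ := q4_surj x
  rw [tbar_eq, ← map_pow, ← map_mul, Ideal.Quotient.eq_zero_iff_mem, I4,
    Ideal.mem_span_singleton] at hx
  have h4 : ((X : (ZMod 2)[X]) + 1) ^ 4 = (X + 1) ^ (4 - i) * (X + 1) ^ i := by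
    rw [← pow_add, Nat.sub_add_cancel hi]
  rw [h4] at hx
  have hdvd : ((X : (ZMod 2)[X]) + 1) ^ i ∣ p :=
    (mul_dvd_mul_iff_left (pow_ne_zero _ X1_ne)).mp hx
  obtain ⟨s, rfl⟩ := hdvd
  exact ⟨q4 s, by rw [tbar_eq, ← map_pow, ← map_mul]⟩

/-- ideal classification -/
lemma r4_ideal (I : Ideal R4) : ∃ i ≤ 4, I = Ideal.span {(bbar + 1) ^ i} := by
  set J : Ideal (ZMod 2)[X] := I.comap q4 with hJ
  obtain ⟨f, hf⟩ := (IsPrincipalIdealRing.principal J).principal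
  rw [Ideal.submodule_span_eq] at hf
  have h4J : ((X : (ZMod 2)[X]) + 1) ^ 4 ∈ J := by
    rw [hJ, Ideal.mem_comap, q4_t4]; exact I.zero_mem
  rw [hf] at h4J
  have hdvd : f ∣ ((X : (ZMod 2)[X]) + 1) ^ 4 :=
    (Ideal.mem_span_singleton).mp h4J
  obtain ⟨i, hi, hassoc⟩ := (dvd_prime_pow X1_prime 4).mp hdvd
  refine ⟨i, hi, ?_⟩
  have hspan : Ideal.span {f} = Ideal.span {((X : (ZMod 2)[X]) + 1) ^ i} :=
    Ideal.span_singleton_eq_span_singleton.mpr hassoc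
  have hmap : I = Ideal.map q4 J :=
    (Ideal.map_comap_of_surjective q4 q4_surj I).symm
  rw [hmap, hf, hspan, Ideal.map_span, Set.image_singleton, tbar_eq, map_pow]

/-- Baer criterion for the free module -/
lemma r4_baer_pi (k : ℕ) : Module.Baer R4 (Fin k → R4) := by
  intro I g
  obtain ⟨i, hi, rfl⟩ := r4_ideal I
  have hti : (bbar + 1) ^ i ∈ Ideal.span {(bbar + 1) ^ i} :=
    Ideal.subset_span rfl
  set m : Fin k → R4 := g ⟨(bbar + 1) ^ i, hti⟩ with hm
  have h0 : (bbar + 1) ^ (4 - i) • m = 0 := by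
    rw [hm, ← map_smul]
    have : ((bbar + 1) ^ (4 - i) • (⟨(bbar + 1) ^ i, hti⟩ :
        Ideal.span {(bbar + 1) ^ i}) : Ideal.span {(bbar + 1) ^ i}) =
        0 := by
      ext
      show (bbar + 1) ^ (4 - i) * (bbar + 1) ^ i = 0
      rw [← pow_add, Nat.sub_add_cancel hi, tbar4]
    rw [this, map_zero]
  have hann : ∀ j, ∃ y : R4, m j = (bbar + 1) ^ i * y := by
    intro j
    apply r4_ann hi
    have := congrFun h0 j
    rw [Pi.smul_apply, smul_eq_mul] at this
    exact this
  choose y hy using hann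
  refine ⟨LinearMap.toSpanSingleton R4 _ y, ?_⟩
  intro x hx
  obtain ⟨r, rfl⟩ := Ideal.mem_span_singleton'.mp hx
  have harg : (⟨r * (bbar + 1) ^ i, hx⟩ : Ideal.span {(bbar + 1) ^ i}) =
      r • ⟨(bbar + 1) ^ i, hti⟩ := by ext; simp [smul_eq_mul]
  rw [harg, map_smul, ← hm, LinearMap.toSpanSingleton_apply]
  rw [mul_smul]
  congr 1
  funext j
  rw [Pi.smul_apply, smul_eq_mul]
  exact (hy j).symm

end AuxR4

/-- If `V` is a finite-dimensional `F₂`-representation of `Γ_Δ = C₃ ⋊ C₄` and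
`U ≤ V` is a `Γ_Δ`-subrepresentation which, as a representation of `C₄ = ⟨b⟩`,
is isomorphic to `F₂[C₄]^{⊕k}` with `k ≥ 1`, then `U` is a direct summand of `V`
as a `Γ_Δ`-representation. -/
theorem stmt_7 (V : Type) [AddCommGroup V] [Module (ZMod 2) V]
    [FiniteDimensional (ZMod 2) V]
    (ρ : Representation (ZMod 2) (PresentedGroup sdRels) V)
    (U : Submodule (ZMod 2) V) (hU : ∀ g, ∀ v ∈ U, ρ g v ∈ U)
    (k : ℕ) (hk : 1 ≤ k)
    (e : U ≃ₗ[ZMod 2] (Fin k → R4))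
    (he : ∀ u : U,
      e ⟨ρ (PresentedGroup.of 1) u.1, hU (PresentedGroup.of 1) u.1 u.2⟩ =
        fun i => bbar * e u i) :
    ∃ W : Submodule (ZMod 2) V,
      (∀ g, ∀ v ∈ W, ρ g v ∈ W) ∧ IsCompl U W := by
  classical
  set b : PresentedGroup sdRels := PresentedGroup.of 1 with hbdef
  set c : PresentedGroup sdRels := PresentedGroup.of 0 with hcdef
  set β : Module.End (ZMod 2) V := ρ b with hβdef
  set γ : Module.End (ZMod 2) V := ρ c with hγdef
  -- group relations as endomorphism identities
  have hγ3 : γ ^ 3 = 1 := by rw [hγdef, ← map_pow, hcdef, sd_c3, map_one]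
  have hβ4 : β ^ 4 = 1 := by rw [hβdef, ← map_pow, hbdef, sd_b4, map_one]
  have hβγ : β * γ = γ * γ * β := by
    rw [hβdef, hγdef, ← map_mul, hbdef, hcdef, sd_bc, map_mul, map_pow, pow_two]
  -- pointwise versions
  have hγ3v : ∀ v : V, γ (γ (γ v)) = v := by
    intro v
    have h := LinearMap.congr_fun hγ3 v
    rw [pow_succ, pow_succ, pow_one, Module.End.mul_apply, Module.End.mul_apply,
      Module.End.one_apply] at h
    exact h
  have hβγv : ∀ v : V, β (γ v) = γ (γ (β v)) := by
    intro v
    have h := LinearMap.congr_fun hβγ v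
    simpa only [Module.End.mul_apply] using h
  have hβγ2v : ∀ v : V, β (γ (γ v)) = γ (β v) := by
    intro v
    rw [hβγv (γ v), hβγv v]
    exact hγ3v (γ (β v))
  -- (β+1)^4 = 0
  have hsq : ∀ x : Module.End (ZMod 2) V, (x + 1) ^ 2 = x ^ 2 + 1 := by
    intro x
    rw [pow_two, pow_two, mul_add, add_mul, mul_one, one_mul]
    rw [add_assoc, ← add_assoc x x 1, two_torsion x, zero_add]
  have hβt : (β + 1) ^ 4 = 0 := by
    have h44 : (β + 1) ^ 4 = ((β + 1) ^ 2) ^ 2 := by rw [← pow_mul]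
    rw [h44, hsq, hsq, ← pow_mul, show 2 * 2 = 4 from rfl, hβ4]
    exact two_torsion 1
  -- the algebra map R4 → End V
  have hvanish : ∀ a ∈ I4, (aeval β).toRingHom a = 0 := by
    intro a ha
    rw [Ideal.mem_span_singleton] at ha
    obtain ⟨s, rfl⟩ := ha
    show aeval β (_ * _) = 0
    rw [map_mul, map_pow, map_add, aeval_X, map_one, hβt, zero_mul]
  let φ : R4 →+* Module.End (ZMod 2) V := Ideal.Quotient.lift I4 (aeval β).toRingHom hvanish
  have hφq : ∀ p : (ZMod 2)[X], φ (q4 p) = aeval β p := fun p =>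
    Ideal.Quotient.lift_mk I4 _ _
  letI instR4 : Module R4 V := Module.compHom V φ
  have hsmul : ∀ (r : R4) (v : V), r • v = φ r v := fun r v => rfl
  have hsmulC : ∀ (a : ZMod 2) (v : V), (algebraMap (ZMod 2) R4 a) • v = a • v := by
    intro a v
    rw [hsmul]
    have h1 : algebraMap (ZMod 2) R4 a = q4 (C a) := rfl
    rw [h1, hφq, aeval_C, Module.algebraMap_end_apply]
  have hbbar_smul : ∀ v : V, bbar • v = β v := by
    intro v
    rw [hsmul, bbar_eq, hφq, aeval_X]
  -- stability of U under polynomials in β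
  have hpow : ∀ (n : ℕ) (v : V), v ∈ U → (β ^ n) v ∈ U := by
    intro n
    induction n with
    | zero => intro v hv; simpa using hv
    | succ n ih =>
      intro v hv
      rw [pow_succ, Module.End.mul_apply]
      exact ih _ (hU b v hv)
  have hstab : ∀ (p : (ZMod 2)[X]) (v : V), v ∈ U → (aeval β p) v ∈ U := by
    intro p
    induction p using Polynomial.induction_on' with
    | add p q hp hq =>
      intro v hv
      rw [map_add, LinearMap.add_apply]
      exact U.add_mem (hp v hv) (hq v hv)
    | monomial n a =>
      intro v hv
      rw [aeval_monomial, Module.End.mul_apply, Module.algebraMap_end_apply]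
      exact U.smul_mem a (hpow n v hv)
  -- U as an R4-submodule
  let U' : Submodule R4 V :=
    { carrier := (U : Set V)
      add_mem' := fun ha hb => U.add_mem ha hb
      zero_mem' := U.zero_mem
      smul_mem' := by
        intro r v hv
        obtain ⟨p, rfl⟩ := q4_surj r
        show q4 p • v ∈ (U : Set V)
        rw [hsmul, hφq]
        exact hstab p v hv }
  -- semilinearity of e
  let βU : Module.End (ZMod 2) U := β.restrict (fun v hv => hU b v hv)
  let Mb : Module.End (ZMod 2) (Fin k → R4) :=
    (Algebra.lmul (ZMod 2) (Fin k → R4)) (fun _ => bbar)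
  have heβ : ∀ u : U, e (βU u) = Mb (e u) := by
    intro u
    have h1 : βU u = ⟨ρ b u.1, hU b u.1 u.2⟩ := Subtype.ext rfl
    rw [h1, hbdef]
    rw [he u]
    rfl
  have hval : ∀ (p : (ZMod 2)[X]) (u : U), ((aeval βU p) u : V) = (aeval β p) u.1 :=
    fun p u => comm_aeval U.subtype βU β (fun _ => rfl) p u
  have hkey : ∀ (p : (ZMod 2)[X]) (u : U), e ((aeval βU p) u) = q4 p • (e u) := by
    intro p u
    have h1 := comm_aeval (e : U →ₗ[ZMod 2] (Fin k → R4)) βU Mb heβ p u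
    simp only [LinearEquiv.coe_coe] at h1
    rw [h1]
    have h2 : aeval Mb p = (Algebra.lmul (ZMod 2) (Fin k → R4)) (aeval (fun _ => bbar) p) :=
      (Polynomial.aeval_algHom_apply (Algebra.lmul (ZMod 2) (Fin k → R4)) _ p)
    rw [h2]
    funext j
    show (aeval (fun _ => bbar : Fin k → R4) p) j * (e u) j = (q4 p • e u) j
    have h3 : (aeval (fun _ => bbar : Fin k → R4) p) j = aeval bbar p :=
      (Polynomial.aeval_algHom_apply (Pi.evalAlgHom (ZMod 2) (fun _ => R4) j)
        (fun _ => bbar : Fin k → R4) p).symm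
    have h4 : aeval bbar p = q4 p := by
      have h5 : bbar = (Ideal.Quotient.mkₐ (ZMod 2) I4) X := rfl
      rw [h5, Polynomial.aeval_algHom_apply, aeval_X_left_apply]
      rfl
    rw [h3, h4, Pi.smul_apply, smul_eq_mul]
  -- the R4-linear equivalence U' ≃ Fin k → R4
  let Φ : U' ≃ₗ[R4] (Fin k → R4) :=
    { toFun := fun x => e ⟨x.1, x.2⟩
      map_add' := by intro x y; rw [← map_add]; rfl
      map_smul' := by
        intro r x
        obtain ⟨p, rfl⟩ := q4_surj r
        have h1 : ((q4 p • x : U') : V) = (aeval βU p) (⟨x.1, x.2⟩ : U) := by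
          rw [hval]
          show q4 p • x.1 = (aeval β p) x.1
          rw [hsmul, hφq]
        have h2 : (⟨(q4 p • x : U').1, (q4 p • x).2⟩ : U) = (aeval βU p) ⟨x.1, x.2⟩ :=
          Subtype.ext h1
        show e ⟨(q4 p • x : U').1, (q4 p • x).2⟩ = q4 p • e ⟨x.1, x.2⟩
        rw [h2, hkey]
      invFun := fun m => ⟨(e.symm m).1, (e.symm m).2⟩
      left_inv := by
        intro x
        apply Subtype.ext
        show ((e.symm (e ⟨x.1, x.2⟩)).1 : V) = x.1
        rw [e.symm_apply_apply]
      right_inv := by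
        intro m
        show e ⟨(e.symm m).1, (e.symm m).2⟩ = m
        have : (⟨(e.symm m).1, (e.symm m).2⟩ : U) = e.symm m := Subtype.ext rfl
        rw [this, e.apply_symm_apply] }
  -- Baer property and the retraction
  have hBaer : Module.Baer R4 U' := by
    intro I g
    obtain ⟨g', hg'⟩ := r4_baer_pi k I (Φ.toLinearMap.comp g)
    refine ⟨Φ.symm.toLinearMap.comp g', fun x mem => ?_⟩
    show Φ.symm (g' x) = g ⟨x, mem⟩
    rw [hg' x mem]
    show Φ.symm (Φ (g ⟨x, mem⟩)) = g ⟨x, mem⟩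
    exact Φ.symm_apply_apply _
  obtain ⟨π₀, hπ₀⟩ := hBaer.extension_property U'.subtype
    (Submodule.injective_subtype U') LinearMap.id
  -- the F₂-linear projection
  let π : Module.End (ZMod 2) V :=
    { toFun := fun v => ((π₀ v : U') : V)
      map_add' := by
        intro x y
        show ((π₀ (x + y) : U') : V) = ((π₀ x : U') : V) + ((π₀ y : U') : V)
        rw [map_add]
        rfl
      map_smul' := by
        intro a v
        show ((π₀ (a • v) : U') : V) = a • ((π₀ v : U') : V)
        rw [← hsmulC a v, map_smul]
        show (algebraMap (ZMod 2) R4 a) • ((π₀ v : U') : V) = a • ((π₀ v : U') : V)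
        exact hsmulC a _ }
  have hπU : ∀ v : V, π v ∈ U := fun v => (π₀ v).2
  have hπid : ∀ v ∈ U, π v = v := by
    intro v hv
    have h3 := LinearMap.congr_fun hπ₀ (⟨v, hv⟩ : U')
    simp only [LinearMap.comp_apply, LinearMap.id_apply] at h3
    show ((π₀ (U'.subtype ⟨v, hv⟩) : U') : V) = v
    exact congrArg Subtype.val h3
  have hπβ : ∀ v : V, π (β v) = β (π v) := by
    intro v
    show ((π₀ (β v) : U') : V) = β ((π₀ v : U') : V)
    rw [← hbbar_smul v, map_smul]
    show bbar • ((π₀ v : U') : V) = β ((π₀ v : U') : V)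
    rw [hbbar_smul]
  -- the averaged projection
  let P : Module.End (ZMod 2) V :=
    π + γ ∘ₗ π ∘ₗ γ ∘ₗ γ + γ ∘ₗ γ ∘ₗ π ∘ₗ γ
  have hPv : ∀ v : V, P v = π v + γ (π (γ (γ v))) + γ (γ (π (γ v))) := by
    intro v
    simp only [P, LinearMap.add_apply, LinearMap.comp_apply]
  have hPmem : ∀ v : V, P v ∈ U := by
    intro v
    rw [hPv]
    exact U.add_mem (U.add_mem (hπU v) (hU c _ (hπU _))) (hU c _ (hU c _ (hπU _)))
  have hPid : ∀ v ∈ U, P v = v := by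
    intro v hv
    rw [hPv, hπid v hv, hπid _ (hU c _ (hU c _ hv)), hπid _ (hU c _ hv)]
    show v + γ (γ (γ v)) + γ (γ (γ v)) = v
    rw [hγ3v, add_assoc, two_torsion v, add_zero]
  have hPγ : ∀ v : V, γ (P v) = P (γ v) := by
    intro v
    rw [hPv v, hPv (γ v), map_add, map_add]
    rw [hγ3v (π (γ v)), hγ3v v]
    abel
  have hPβ : ∀ v : V, β (P v) = P (β v) := by
    intro v
    rw [hPv v, hPv (β v), map_add, map_add]
    rw [hβγv (π (γ (γ v))), hβγ2v (π (γ v))]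
    rw [← hπβ v, ← hπβ (γ (γ v)), ← hπβ (γ v)]
    rw [hβγ2v v, hβγv v]
    abel
  -- commuting subgroup
  have hinv : ∀ (g : PresentedGroup sdRels) (x : V), ρ g⁻¹ (ρ g x) = x := by
    intro g x
    rw [← Module.End.mul_apply, ← map_mul, inv_mul_cancel, map_one, Module.End.one_apply]
  let H : Subgroup (PresentedGroup sdRels) :=
    { carrier := {g | ∀ v : V, ρ g (P v) = P (ρ g v)}
      one_mem' := by
        intro v
        rw [map_one, Module.End.one_apply, Module.End.one_apply]
      mul_mem' := by
        intro a₁ b₁ ha hb v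
        rw [map_mul, Module.End.mul_apply, Module.End.mul_apply, hb v, ha (ρ b₁ v)]
      inv_mem' := by
        intro g hg v
        have h1 : ρ g (P (ρ g⁻¹ v)) = P v := by
          rw [hg (ρ g⁻¹ v)]
          congr 1
          rw [← Module.End.mul_apply, ← map_mul, mul_inv_cancel, map_one,
            Module.End.one_apply]
        calc ρ g⁻¹ (P v) = ρ g⁻¹ (ρ g (P (ρ g⁻¹ v))) := by rw [h1]
          _ = P (ρ g⁻¹ v) := hinv g _ }
  have hHmem : ∀ g, g ∈ H := by
    intro g
    apply PresentedGroup.generated_by sdRels H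
    intro j
    fin_cases j
    · show ∀ v : V, ρ c (P v) = P (ρ c v)
      exact hPγ
    · show ∀ v : V, ρ b (P v) = P (ρ b v)
      exact hPβ
  have hcommρ : ∀ (g) (v : V), ρ g (P v) = P (ρ g v) := fun g => hHmem g
  refine ⟨LinearMap.ker P, ?_, ?_⟩
  · intro g v hv
    rw [LinearMap.mem_ker] at hv ⊢
    rw [← hcommρ g v, hv, map_zero]
  · constructor
    · refine Submodule.disjoint_def.mpr fun x hxU hxW => ?_
      have h1 := hPid x hxU
      rw [LinearMap.mem_ker] at hxW
      rw [hxW] at h1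
      exact h1.symm
    · rw [codisjoint_iff, eq_top_iff]
      rintro v -
      have hmem2 : v - P v ∈ LinearMap.ker P := by
        rw [LinearMap.mem_ker, map_sub, hPid (P v) (hPmem v), sub_self]
      exact Submodule.mem_sup.mpr ⟨P v, hPmem v, v - P v, hmem2, by abel⟩
end

section
/- The 8-dimensional F₂-representation U₈ = F₄ ⊕ F₄x ⊕ F₄x² ⊕ F₄x³ of Γ_Δ, where c acts diagonally by multiplication by a primitive cube root of unity and b acts as the cyclic permutation (1, x, x², x³), decomposes as U₈ ≅ U₄ ⊕ U₄. -/
open Polynomial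

set_option synthInstance.maxHeartbeats 400000
set_option maxHeartbeats 2000000

/-- `F₄ = F₂[c]/(1 + c + c²)`, the field with four elements. -/
noncomputable abbrev F4 : Type :=
  (ZMod 2)[X] ⧸ Ideal.span {(1 + X + X ^ 2 : (ZMod 2)[X])}

/-- The class of `c` in `F₄` (a primitive cube root of unity). -/
noncomputable def gam : F4 :=
  Ideal.Quotient.mk (Ideal.span {(1 + X + X ^ 2 : (ZMod 2)[X])}) X

lemma hq : gam ^ 2 + gam + 1 = 0 := by
  have h0 : (Ideal.Quotient.mk (Ideal.span {(1 + X + X ^ 2 : (ZMod 2)[X])}))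
      (1 + X + X ^ 2) = 0 :=
    Ideal.Quotient.eq_zero_iff_mem.mpr (Ideal.mem_span_singleton_self _)
  have h1 : gam ^ 2 + gam + 1 = (Ideal.Quotient.mk
      (Ideal.span {(1 + X + X ^ 2 : (ZMod 2)[X])})) (1 + X + X ^ 2) := by
    simp only [gam, map_add, map_pow, map_one]
    ring
  rw [h1, h0]

lemma h2 : (2 : F4) = 0 := by
  have h := map_ofNat (algebraMap (ZMod 2) F4) 2
  rw [← h, show (2 : ZMod 2) = 0 from rfl, map_zero]

/-- Forward map. -/
noncomputable def fwd : (Fin 4 → F4) →ₗ[F4] (F4 × F4) × (F4 × F4) where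
  toFun u := ((u 1 + gam * u 2 + gam * u 3, u 0 + gam * u 1 + u 2 + gam * u 3),
      (gam ^ 2 * u 1 + gam ^ 2 * u 2 + u 3, gam * u 0 + u 1 + gam * u 2 + u 3))
  map_add' u v := by
    simp only [Pi.add_apply, Prod.mk_add_mk, Prod.mk.injEq]
    refine ⟨⟨by ring, by ring⟩, by ring, by ring⟩
  map_smul' r u := by
    simp only [Pi.smul_apply, smul_eq_mul, RingHom.id_apply, Prod.smul_mk, Prod.mk.injEq]
    refine ⟨⟨by ring, by ring⟩, by ring, by ring⟩

/-- Backward map. -/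
noncomputable def bwd : (F4 × F4) × (F4 × F4) →ₗ[F4] (Fin 4 → F4) where
  toFun v := ![gam * v.1.1 + gam ^ 2 * v.1.2 + gam ^ 2 * v.2.1 + v.2.2,
      gam ^ 2 * v.1.1 + gam ^ 2 * v.1.2 + gam * v.2.1 + gam * v.2.2,
      gam * v.1.1 + gam ^ 2 * v.2.1,
      gam ^ 2 * v.1.1 + gam * v.1.2 + gam * v.2.1 + v.2.2]
  map_add' u v := by
    funext i
    fin_cases i <;>
      simp <;> ring
  map_smul' r u := by
    funext i
    fin_cases i <;>
      simp [smul_eq_mul, mul_add] <;> ring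

noncomputable def myEquiv : (Fin 4 → F4) ≃ₗ[F4] (F4 × F4) × (F4 × F4) :=
  LinearEquiv.ofLinear fwd bwd
    (by
      apply LinearMap.ext; intro v
      simp only [LinearMap.comp_apply, LinearMap.id_apply, fwd, bwd, LinearMap.coe_mk,
        AddHom.coe_mk, Matrix.cons_val_zero, Matrix.cons_val_one, Matrix.head_cons,
        Matrix.cons_val_two, Matrix.tail_cons, Matrix.cons_val_three]
      refine Prod.ext (Prod.ext ?_ ?_) (Prod.ext ?_ ?_)
      · linear_combination (2*v.1.2 + v.1.1 + gam*v.2.1 + gam*v.1.1) * hq + (-v.1.2 - v.1.1 + gam*v.2.2 - gam*v.1.2 - gam*v.1.1) * h2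
      · linear_combination (v.2.2 + 4*v.2.1 + v.1.2 - 2*v.1.1 + gam*v.1.2 + 2*gam*v.1.1) * hq + (-2*v.2.1 - v.1.2 + v.1.1 - 2*gam*v.2.1 - gam*v.1.2 + gam*v.1.1) * h2
      · linear_combination (-v.2.2 - v.2.1 + gam*v.2.2 - gam*v.1.2 + gam^2*v.2.1 + gam^2*v.1.2 + gam^2*v.1.1) * hq + (v.2.2 + gam*v.2.1 + gam*v.1.2) * h2
      · linear_combination (-2*v.2.1 + 4*v.1.1 + 2*gam*v.2.1 + gam*v.1.2) * hq + (v.2.1 - 2*v.1.1 + gam*v.2.2 + gam*v.2.1 - 2*gam*v.1.1) * h2)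
    (by
      apply LinearMap.ext; intro u
      funext i
      fin_cases i <;> simp [fwd, bwd]
      · linear_combination (u 3 + 2*u 2 - u 1 + u 0 + gam*u 3 - gam*u 2 + gam^2*u 2 + gam^2*u 1) * hq + (-u 2 + u 1 - u 0 - gam*u 3 + gam*u 1) * h2
      · linear_combination (-2*u 3 - u 1 + 2*u 0 + 2*gam*u 3 + 2*gam*u 2 + 2*gam*u 1) * hq + (u 3 - u 0 + gam*u 3 - gam*u 2 - gam*u 0) * h2
      · linear_combination (2*u 3 + u 2 - gam*u 2 - gam*u 1 + gam^2*u 2 + gam^2*u 1) * hq + (-u 3 - u 2 - gam*u 3 + gam*u 1) * h2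
      · linear_combination (-2*u 2 + u 1 + gam*u 3 + 2*gam*u 2 + gam*u 1) * hq + (u 2 + gam*u 2 - gam*u 1 + gam*u 0) * h2)

/-- `U₈ = F₄ ⊕ F₄x ⊕ F₄x² ⊕ F₄x³` with `c` acting diagonally by multiplication
by `γ` and `b` acting as the cyclic permutation `(1, x, x², x³)` (twisted by
Frobenius, by the relation `bc = c²b`) decomposes as `U₈ ≅ U₄ ⊕ U₄`, where `U₄`
is the faithful 4-dimensional representation on `F₄ ⊕ F₄x` with
`b·(u,v) = (u² + v², γ·v²)`. -/
theorem stmt_16 :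
    ∃ e : (Fin 4 → F4) ≃ₗ[ZMod 2] (F4 × F4) × (F4 × F4),
      (∀ u : Fin 4 → F4,
        e (fun i => gam * u i) =
          ((gam * (e u).1.1, gam * (e u).1.2),
           (gam * (e u).2.1, gam * (e u).2.2))) ∧
      (∀ u : Fin 4 → F4,
        e ![(u 3) ^ 2, (u 0) ^ 2, (u 1) ^ 2, (u 2) ^ 2] =
          (((e u).1.1 ^ 2 + (e u).1.2 ^ 2, gam * (e u).1.2 ^ 2),
           ((e u).2.1 ^ 2 + (e u).2.2 ^ 2, gam * (e u).2.2 ^ 2))) := by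
  refine ⟨myEquiv.restrictScalars (ZMod 2), ?_, ?_⟩
  · intro u
    simp only [LinearEquiv.restrictScalars_apply, myEquiv, LinearEquiv.ofLinear_apply, fwd,
      LinearMap.coe_mk, AddHom.coe_mk]
    refine Prod.ext (Prod.ext ?_ ?_) (Prod.ext ?_ ?_) <;> dsimp <;> ring
  · intro u
    simp only [LinearEquiv.restrictScalars_apply, myEquiv, LinearEquiv.ofLinear_apply, fwd,
      LinearMap.coe_mk, AddHom.coe_mk, Matrix.cons_val_zero, Matrix.cons_val_one,
      Matrix.head_cons, Matrix.cons_val_two, Matrix.tail_cons, Matrix.cons_val_three,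
      Fin.isValue, Matrix.cons_val_fin_one]
    refine Prod.ext (Prod.ext ?_ ?_) (Prod.ext ?_ ?_) <;> dsimp
    · linear_combination (-2*u 3^2 - 2*u 2*u 3 - u 2^2 - 2*u 1*u 3 - u 1^2) * hq + (u 3^2 + u 2*u 3 + u 1*u 3 - u 0*u 2 + gam*u 3^2 + gam*u 2^2 - 2*gam*u 1*u 2 + gam*u 1^2 - gam*u 0*u 3 - gam*u 0*u 1) * h2
    · linear_combination (u 3^2 - 2*u 2*u 3 + 2*u 1*u 3 - 2*u 1*u 2 + u 1^2 - 2*u 0*u 3 - 2*u 0*u 1 - gam*u 3^2 - 2*gam*u 1*u 3 - gam*u 1^2) * hq + (u 2*u 3 - u 1*u 3 + u 1*u 2 + u 0*u 3 + u 0*u 1 + gam*u 2*u 3 + gam*u 1*u 2 + gam*u 0*u 3 - gam*u 0*u 2 + gam*u 0*u 1) * h2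
    · linear_combination (-2*u 2*u 3 - u 2^2 - 2*u 1*u 3 + u 1^2 - 2*u 0*u 2 + gam*u 2^2 + 2*gam*u 1*u 2 + gam*u 1^2 - gam^2*u 2^2 - 2*gam^2*u 1*u 2 - gam^2*u 1^2) * hq + (-u 3^2 + u 2*u 3 + u 2^2 - u 1^2 + u 0*u 2 + gam*u 1*u 3 - 2*gam*u 1*u 2 - gam*u 1^2 - gam*u 0*u 3 + gam*u 0*u 2 - gam*u 0*u 1) * h2
    · linear_combination (-2*u 2*u 3 + u 2^2 - 2*u 1*u 2 - 2*u 0*u 3 + 2*u 0*u 2 - 2*u 0*u 1 + u 0^2 - gam*u 2^2 - 2*gam*u 0*u 2 - gam*u 0^2) * hq + (u 2*u 3 + u 1*u 2 + u 0*u 3 - u 0*u 2 + u 0*u 1 + gam*u 2*u 3 - gam*u 1*u 3 + gam*u 1*u 2 + gam*u 0*u 3 + gam*u 0*u 1) * h2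
end
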